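/- Let ℓ ≥ 1, let k = (ℓ+1)², and let x_1, …, x_{ℓ+1} ∈ ℝ. Define the ℓ×(ℓ+1) matrix a by a_{r,c} = x_c, and for each i ∈ [ℓ+1] define the ℓ×ℓ matrix b_i by (b_i)_{r,c} = x_i if c < r, (b_i)_{r,c} = −r·x_i if c = r, and (b_i)_{r,c} = 0 if c > r. Let E = (a ‖ b_1 ‖ ⋯ ‖ b_{ℓ+1}) ∈ ℝ^{ℓ×k} be their horizontal concatenation, with rows E_1, …, E_ℓ ∈ ℝ^k. Then: (i) for every nonempty S ⊆ [ℓ], the entries of the entrywise product ⊙_{r∈S} E_r sum to zero, i.e., Σ_{c=1}^{k} ∏_{r∈S} E_{r,c} = 0 (the rows of E are ℓ-wise superorthogonal with respect to the uniform weights (1/k,…,1/k)); and (ii) if x_1, …, x_{ℓ+1} are pairwise distinct, then ⊙_{r∈[ℓ]} E_r does not lie in span{ ⊙_{r∈S} E_r : S ⊊ [ℓ] } (the rows of E are non-top-degree-vanishing), where the entrywise product over S = ∅ is the all-ones vector. -/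

import Mathlib

/-- the rows of the concatenated matrix `E = (a ‖ b_1 ‖ ⋯ ‖ b_{ℓ+1})` are
(i) `ℓ`-wise superorthogonal with respect to the uniform weights (each entrywise product of
a nonempty subset of rows has entries summing to zero), and (ii) non-top-degree-vanishing
when `x_1, …, x_{ℓ+1}` are pairwise distinct. The columns are indexed by
`Fin (ℓ+1) ⊕ Fin (ℓ+1) × Fin ℓ`, with `Sum.inl c` the columns of `a` and `Sum.inr (i, c)`
the columns of `b_i` (rows and columns of the blocks are 0-indexed here, so the diagonal
entry of `b_i` in row `r` is `-(r+1)·x_i`). -/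
theorem stmt_16 (ℓ : ℕ) (hℓ : 1 ≤ ℓ) (x : Fin (ℓ + 1) → ℝ)
    (E : Fin ℓ → (Fin (ℓ + 1) ⊕ Fin (ℓ + 1) × Fin ℓ) → ℝ)
    (hEa : ∀ r c, E r (Sum.inl c) = x c)
    (hEb : ∀ (r : Fin ℓ) (i : Fin (ℓ + 1)) (c : Fin ℓ),
      E r (Sum.inr (i, c)) =
        if (c : ℕ) < (r : ℕ) then x i
        else if c = r then -(((r : ℕ) : ℝ) + 1) * x i
        else 0) :
    (∀ S : Finset (Fin ℓ), S.Nonempty →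
      ∑ c : Fin (ℓ + 1) ⊕ Fin (ℓ + 1) × Fin ℓ, ∏ r ∈ S, E r c = 0) ∧
    (Function.Injective x →
      (fun c => ∏ r, E r c) ∉ Submodule.span ℝ
        { v : (Fin (ℓ + 1) ⊕ Fin (ℓ + 1) × Fin ℓ) → ℝ |
          ∃ S : Finset (Fin ℓ), S ≠ Finset.univ ∧ v = fun c => ∏ r ∈ S, E r c }) := by
  constructor
  · -- superorthogonality
    intro S hS
    set s := S.card with hs
    have hs1 : 1 ≤ s := Finset.card_pos.mpr hS
    set m := S.min' hS with hm
    have hmS : m ∈ S := S.min'_mem hS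
    have hle : ∀ r ∈ S, m ≤ r := fun r hr => S.min'_le r hr
    rw [Fintype.sum_sum_type]
    have h1 : ∀ c : Fin (ℓ+1), ∏ r ∈ S, E r (Sum.inl c) = x c ^ s := by
      intro c; rw [Finset.prod_congr rfl fun r _ => hEa r c, Finset.prod_const]
    have h2 : ∀ (i : Fin (ℓ+1)) (c : Fin ℓ), ∏ r ∈ S, E r (Sum.inr (i, c)) =
        (if (c:ℕ) < (m:ℕ) then x i ^ s else 0) +
        (if c = m then -(((m:ℕ):ℝ)+1) * x i ^ s else 0) := by
      intro i c
      rcases lt_trichotomy (c:ℕ) (m:ℕ) with hc | hc | hc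
      · have hall : ∀ r ∈ S, E r (Sum.inr (i,c)) = x i := by
          intro r hr
          rw [hEb]
          have : (c:ℕ) < (r:ℕ) := lt_of_lt_of_le hc (hle r hr)
          simp [this]
        rw [Finset.prod_congr rfl hall, Finset.prod_const]
        have hcm : c ≠ m := by intro h; rw [h] at hc; omega
        simp [hc, hcm, hs]
      · have hcm : c = m := Fin.ext hc
        have hcS : c ∈ S := by rw [hcm]; exact hmS
        rw [← Finset.mul_prod_erase S _ hcS]
        have herase : ∀ r ∈ S.erase c, E r (Sum.inr (i,c)) = x i := by
          intro r hr
          obtain ⟨hne, hrS⟩ := Finset.mem_erase.mp hr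
          have hcr : (c:ℕ) < (r:ℕ) := by
            have h1 : m ≤ r := hle r hrS
            have h2 : r ≠ c := hne.symm ∘ Eq.symm
            have := Fin.le_def.mp h1
            rcases Nat.lt_or_ge (c:ℕ) (r:ℕ) with h | h
            · exact h
            · exfalso; exact hne (Fin.ext (by omega))
          rw [hEb]; simp [hcr]
        rw [Finset.prod_congr rfl herase, Finset.prod_const,
          Finset.card_erase_of_mem hcS]
        rw [hEb]
        have hxx : x i * x i ^ (s - 1) = x i ^ s := by
          rw [← pow_succ']
          congr 1
          omega
        rw [if_neg (lt_irrefl (c:ℕ)), if_pos rfl, ← hs, mul_assoc, hxx,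
          if_neg (show ¬ ((c:ℕ) < (m:ℕ)) by omega), if_pos hcm, zero_add, hc]
      · have h0 : E m (Sum.inr (i,c)) = 0 := by
          rw [hEb]
          have h1 : ¬ ((c:ℕ) < (m:ℕ)) := by omega
          have h2 : c ≠ m := fun h => by rw [h] at hc; omega
          simp [h1, h2]
        rw [Finset.prod_eq_zero hmS h0]
        have h1 : ¬ ((c:ℕ) < (m:ℕ)) := by omega
        have h2 : c ≠ m := fun h => by rw [h] at hc; omega
        simp [h1, h2]
    have hsum2 : ∑ p : Fin (ℓ+1) × Fin ℓ, ∏ r ∈ S, E r (Sum.inr p)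
        = ∑ i : Fin (ℓ+1), -(x i ^ s) := by
      rw [Fintype.sum_prod_type]
      refine Finset.sum_congr rfl fun i _ => ?_
      rw [Finset.sum_congr rfl fun c _ => h2 i c, Finset.sum_add_distrib]
      have hA : ∑ c : Fin ℓ, (if (c:ℕ) < (m:ℕ) then x i ^ s else 0)
          = ((m:ℕ) : ℝ) * x i ^ s := by
        rw [Fin.sum_univ_eq_sum_range (fun j => if j < (m:ℕ) then x i ^ s else 0)]
        rw [← Finset.sum_filter]
        have hf : (Finset.range ℓ).filter (· < (m:ℕ)) = Finset.range (m:ℕ) := by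
          ext j
          simp only [Finset.mem_filter, Finset.mem_range]
          have := m.isLt
          omega
        rw [hf, Finset.sum_const, Finset.card_range, nsmul_eq_mul]
      have hB : ∑ c : Fin ℓ, (if c = m then -(((m:ℕ):ℝ)+1) * x i ^ s else 0)
          = -(((m:ℕ):ℝ)+1) * x i ^ s := by
        simp
      rw [hA, hB]; ring
    rw [Finset.sum_congr rfl fun c _ => h1 c, hsum2]
    simp
  · -- non-top-degree-vanishing
    intro hinj hmem
    set M : Matrix (Fin (ℓ+1)) (Fin (ℓ+1)) ℝ :=
      Matrix.of (fun s c => x c ^ (s:ℕ)) with hMdef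
    have hdet : M.det ≠ 0 := by
      have hMt : M.transpose = Matrix.vandermonde x := by
        ext i j
        simp [hMdef, Matrix.vandermonde]
      rw [← Matrix.det_transpose, hMt, Matrix.det_vandermonde]
      refine Finset.prod_ne_zero_iff.mpr fun i _ =>
        Finset.prod_ne_zero_iff.mpr fun j hj => ?_
      exact sub_ne_zero.mpr fun h => (Finset.mem_Ioi.mp hj).ne' (hinj h)
    set β := M⁻¹.mulVec (Pi.single (Fin.last ℓ) 1) with hβdef
    have hβ : M.mulVec β = Pi.single (Fin.last ℓ) 1 := by
      rw [hβdef, Matrix.mulVec_mulVec,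
        Matrix.mul_nonsing_inv _ (isUnit_iff_ne_zero.mpr hdet), Matrix.one_mulVec]
    have hpow : ∀ n : ℕ, n ≤ ℓ → ∑ c, β c * x c ^ n = if n = ℓ then 1 else 0 := by
      intro n hn
      have h := congrFun hβ ⟨n, by omega⟩
      simp only [Matrix.mulVec, dotProduct, hMdef, Matrix.of_apply] at h
      rw [Finset.sum_congr rfl fun c _ => mul_comm (β c) (x c ^ n)]
      rw [h, Pi.single_apply]
      congr 1
      simp [Fin.ext_iff, Fin.val_last, eq_comm]
    let φ : ((Fin (ℓ+1) ⊕ Fin (ℓ+1) × Fin ℓ) → ℝ) →ₗ[ℝ] ℝ :=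
      { toFun := fun u => ∑ c, β c * u (Sum.inl c)
        map_add' := fun u v => by
          simp [mul_add, Finset.sum_add_distrib]
        map_smul' := fun a u => by
          simp only [Pi.smul_apply, smul_eq_mul, RingHom.id_apply, Finset.mul_sum]
          exact Finset.sum_congr rfl fun c _ => by ring }
    have hker : Submodule.span ℝ
        { v : (Fin (ℓ + 1) ⊕ Fin (ℓ + 1) × Fin ℓ) → ℝ |
          ∃ S : Finset (Fin ℓ), S ≠ Finset.univ ∧ v = fun c => ∏ r ∈ S, E r c }
        ≤ LinearMap.ker φ := by
      rw [Submodule.span_le]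
      rintro w ⟨S, hSne, rfl⟩
      have hcard : S.card < ℓ := by
        have := Finset.card_lt_iff_ne_univ S |>.mpr hSne
        simpa [Fintype.card_fin] using this
      have : φ (fun c => ∏ r ∈ S, E r c) = 0 := by
        show ∑ c, β c * ∏ r ∈ S, E r (Sum.inl c) = 0
        have h1 : ∀ c : Fin (ℓ+1), ∏ r ∈ S, E r (Sum.inl c) = x c ^ S.card := by
          intro c; rw [Finset.prod_congr rfl fun r _ => hEa r c, Finset.prod_const]
        rw [Finset.sum_congr rfl fun c _ => by rw [h1 c]]
        rw [hpow S.card (le_of_lt hcard)]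
        simp [Nat.ne_of_lt hcard]
      exact LinearMap.mem_ker.mpr this
    have h0 : φ (fun c => ∏ r, E r c) = 0 := hker hmem
    have h1 : φ (fun c => ∏ r, E r c) = 1 := by
      show ∑ c, β c * ∏ r : Fin ℓ, E r (Sum.inl c) = 1
      have hc : ∀ c : Fin (ℓ+1), ∏ r : Fin ℓ, E r (Sum.inl c) = x c ^ ℓ := by
        intro c
        rw [Finset.prod_congr rfl fun r _ => hEa r c, Finset.prod_const,
          Finset.card_univ, Fintype.card_fin]
      rw [Finset.sum_congr rfl fun c _ => by rw [hc c]]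
      rw [hpow ℓ le_rfl]
      simp
    rw [h0] at h1
    exact one_ne_zero h1.symm
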